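/- For n ≥ 1, define assignments sᵢ over domain {p₁,…,pₙ,q₁,…,qₙ} for 0 ≤ i < 2ⁿ by: (sᵢ(p₁),…,sᵢ(pₙ)) is the binary representation of i and (sᵢ(q₁),…,sᵢ(qₙ)) is the binary representation of (i+1) mod 2ⁿ. Then the team T = {s₀,…,s_{2ⁿ−1}} satisfies the inclusion atom p⃗ ⊆ q⃗, but for every i, the team T \ {sᵢ} does not. Hence T has 2ⁿ neighbours violating the inclusion atom. -/

import Mathlib

/-- An assignment over domain {p₁,…,pₙ,q₁,…,qₙ}. -/
abbrev IncAssign (n : ℕ) := (Fin n → Bool) × (Fin n → Bool)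

/-- The inclusion atom p⃗ ⊆ q⃗. -/
def IncAtom {n : ℕ} (T : Set (IncAssign n)) : Prop :=
  ∀ s ∈ T, ∃ s' ∈ T, s.1 = s'.2

/-- Binary representation of a natural number as n bits. -/
def binRep (n : ℕ) (i : ℕ) : Fin n → Bool := fun k => i.testBit k

/-- The assignment sᵢ: p⃗ is the binary representation of i, q⃗ that of (i+1) mod 2ⁿ. -/
def incWitness (n : ℕ) (i : ℕ) : IncAssign n :=
  (binRep n i, binRep n ((i + 1) % 2 ^ n))

lemma binRep_mod (n a : ℕ) : binRep n (a % 2 ^ n) = binRep n a := by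
  funext k
  simp [binRep, Nat.testBit_mod_two_pow, k.isLt]

lemma binRep_inj {n a b : ℕ} (ha : a < 2 ^ n) (hb : b < 2 ^ n)
    (h : binRep n a = binRep n b) : a = b := by
  apply Nat.eq_of_testBit_eq
  intro k
  by_cases hk : k < n
  · exact congrFun h ⟨k, hk⟩
  · have h1 : a < 2 ^ k := lt_of_lt_of_le ha (Nat.pow_le_pow_right (by norm_num) (le_of_not_gt hk))
    have h2 : b < 2 ^ k := lt_of_lt_of_le hb (Nat.pow_le_pow_right (by norm_num) (le_of_not_gt hk))
    rw [Nat.testBit_lt_two_pow h1, Nat.testBit_lt_two_pow h2]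

theorem inclusion_cycle_team_neighbours (n : ℕ) (hn : 1 ≤ n) :
    IncAtom {s : IncAssign n | ∃ i < 2 ^ n, s = incWitness n i} ∧
    ∀ i < 2 ^ n,
      ¬ IncAtom ({s : IncAssign n | ∃ j < 2 ^ n, s = incWitness n j} \ {incWitness n i}) := by
  have hpos : 0 < 2 ^ n := Nat.pow_pos (by norm_num)
  have h2 : 2 ≤ 2 ^ n := by
    calc 2 = 2 ^ 1 := rfl
    _ ≤ 2 ^ n := Nat.pow_le_pow_right (by norm_num) hn
  constructor
  · rintro s ⟨i, hi, rfl⟩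
    refine ⟨incWitness n ((i + (2 ^ n - 1)) % 2 ^ n),
      ⟨(i + (2 ^ n - 1)) % 2 ^ n, Nat.mod_lt _ hpos, rfl⟩, ?_⟩
    show binRep n i = binRep n (((i + (2 ^ n - 1)) % 2 ^ n + 1) % 2 ^ n)
    have : ((i + (2 ^ n - 1)) % 2 ^ n + 1) % 2 ^ n = i := by
      rw [Nat.mod_add_mod]
      have : i + (2 ^ n - 1) + 1 = i + 2 ^ n := by omega
      rw [this, Nat.add_mod_right, Nat.mod_eq_of_lt hi]
    rw [this]
  · intro i hi H
    set j := (i + 1) % 2 ^ n with hj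
    have hjlt : j < 2 ^ n := Nat.mod_lt _ hpos
    have hji : j ≠ i := by
      rcases Nat.lt_or_ge (i + 1) (2 ^ n) with h | h
      · rw [hj, Nat.mod_eq_of_lt h]; omega
      · have : i + 1 = 2 ^ n := by omega
        rw [hj, this, Nat.mod_self]; omega
    have hmem : incWitness n j ∈
        ({s : IncAssign n | ∃ k < 2 ^ n, s = incWitness n k} \ {incWitness n i}) := by
      refine ⟨⟨j, hjlt, rfl⟩, ?_⟩
      intro hEq
      have : binRep n j = binRep n i := congrArg Prod.fst hEq
      exact hji (binRep_inj hjlt hi this)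
    obtain ⟨s', ⟨⟨k, hk, rfl⟩, hne⟩, hfs⟩ := H _ hmem
    have hkk : j = (k + 1) % 2 ^ n :=
      binRep_inj hjlt (Nat.mod_lt _ hpos) hfs
    have hmod : (i + 1) % 2 ^ n = (k + 1) % 2 ^ n := by rw [← hj, hkk]
    have : i = k := by
      have h3 : i % 2 ^ n = k % 2 ^ n := Nat.ModEq.add_right_cancel' 1 hmod
      rwa [Nat.mod_eq_of_lt hi, Nat.mod_eq_of_lt hk] at h3
    exact hne (by rw [this]; rfl)
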